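/- Fix α ∈ ℝ with α/π irrational, ℓ > 1, c > 0, τ ∈ [1, ℓ], and β, γ ∈ ℝ. For n = 1,…,N write c τ ℓ^{N−n} cos(β + γ − nα) = k_n + ε_n with k_n ∈ ℤ and ε_n ∈ [−1/2, 1/2). If max{|ε_n|, |ε_{n+1}|, |ε_{n+2}|} ≤ 1/(15ℓ²), then |(−1)ℓ² k_{n+2} + (2 cos α) ℓ k_{n+1} − k_n| < 1/2; in particular k_{n+2} and k_{n+1} uniquely determine k_n. Moreover, without the smallness assumption, |(−1)ℓ²ε_{n+2} + (2cos α)ℓε_{n+1} − ε_n| ≤ ℓ² + ℓ + 1, so for fixed k_{n+2}, k_{n+1} there are at most 7ℓ² possible values of k_n. -/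

import Mathlib

open Real

set_option maxHeartbeats 1000000 in
/-- The three-term recurrence argument inside Lemma 4.3 of the paper. Write
`c τ ℓ^{N-n} cos(β+γ-nα) = k_n + ε_n` with `k_n ∈ ℤ` and `ε_n ∈ [-1/2,1/2)`. If
`max(|ε_n|,|ε_{n+1}|,|ε_{n+2}|) ≤ 1/(15ℓ²)` then
`|(-1)ℓ² k_{n+2} + (2cos α)ℓ k_{n+1} - k_n| < 1/2` (so `k_{n+2}, k_{n+1}` determine
`k_n`); unconditionally `|(-1)ℓ²ε_{n+2} + (2cos α)ℓε_{n+1} - ε_n| ≤ ℓ² + ℓ + 1`, so for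
fixed `k_{n+2}, k_{n+1}` there are at most `7ℓ²` possible values of `k_n`. -/
theorem three_term_recurrence
    (α ℓ c τ β γ : ℝ)
    (hα : Irrational (α / Real.pi)) (hℓ : 1 < ℓ) (hc : 0 < c)
    (hτ : τ ∈ Set.Icc 1 ℓ)
    (N : ℕ) (k : ℕ → ℤ) (e : ℕ → ℝ)
    (hdecomp : ∀ n, 1 ≤ n → n ≤ N →
      c * τ * ℓ ^ (N - n) * Real.cos (β + γ - n * α) = (k n : ℝ) + e n ∧
      -(1/2) ≤ e n ∧ e n < 1/2) :
    (∀ n, 1 ≤ n → n + 2 ≤ N →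
      (max (|e n|) (max (|e (n+1)|) (|e (n+2)|)) ≤ 1 / (15 * ℓ ^ 2) →
        |(-1) * ℓ ^ 2 * (k (n+2) : ℝ) + 2 * Real.cos α * ℓ * (k (n+1) : ℝ) - (k n : ℝ)|
          < 1/2) ∧
      |(-1) * ℓ ^ 2 * e (n+2) + 2 * Real.cos α * ℓ * e (n+1) - e n| ≤ ℓ ^ 2 + ℓ + 1) ∧
    (∀ K2 K1 : ℤ,
      (Set.ncard {j : ℤ |
        |(-1) * ℓ ^ 2 * (K2 : ℝ) + 2 * Real.cos α * ℓ * (K1 : ℝ) - (j : ℝ)|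
          ≤ ℓ ^ 2 + ℓ + 1} : ℝ) ≤ 7 * ℓ ^ 2) := by
  have hℓ0 : (0:ℝ) < ℓ := by linarith
  have hcosα : |Real.cos α| ≤ 1 := Real.abs_cos_le_one α
  have tri : ∀ x y z : ℝ,
      |(-1) * ℓ ^ 2 * z + 2 * Real.cos α * ℓ * y - x| ≤ ℓ ^ 2 * |z| + 2 * ℓ * |y| + |x| := by
    intro x y z
    have h1 : |(-1) * ℓ ^ 2 * z + 2 * Real.cos α * ℓ * y - x|
        ≤ |(-1) * ℓ ^ 2 * z| + |2 * Real.cos α * ℓ * y| + |x| := by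
      calc |(-1) * ℓ ^ 2 * z + 2 * Real.cos α * ℓ * y - x|
          ≤ |(-1) * ℓ ^ 2 * z + 2 * Real.cos α * ℓ * y| + |x| := abs_sub _ _
        _ ≤ |(-1) * ℓ ^ 2 * z| + |2 * Real.cos α * ℓ * y| + |x| := by
            linarith [abs_add_le ((-1) * ℓ ^ 2 * z) (2 * Real.cos α * ℓ * y)]
    have h2 : |(-1) * ℓ ^ 2 * z| = ℓ ^ 2 * |z| := by
      rw [abs_mul, abs_mul]
      simp [abs_of_nonneg (sq_nonneg ℓ)]
    have h3 : |2 * Real.cos α * ℓ * y| ≤ 2 * ℓ * |y| := by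
      rw [abs_mul, abs_mul, abs_mul]
      rw [abs_of_nonneg (by norm_num : (0:ℝ) ≤ 2), abs_of_nonneg hℓ0.le]
      nlinarith [mul_le_mul_of_nonneg_right hcosα (mul_nonneg hℓ0.le (abs_nonneg y)),
        abs_nonneg y, abs_nonneg (Real.cos α)]
    linarith
  constructor
  · intro n hn hnN
    obtain ⟨E0, he0l, he0u⟩ := hdecomp n hn (by omega)
    obtain ⟨E1, he1l, he1u⟩ := hdecomp (n+1) (by omega) (by omega)
    obtain ⟨E2, he2l, he2u⟩ := hdecomp (n+2) (by omega) (by omega)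
    have hcos : Real.cos (β + γ - ((n:ℝ)+2) * α)
        = 2 * Real.cos α * Real.cos (β + γ - ((n:ℝ)+1) * α)
          - Real.cos (β + γ - (n:ℝ) * α) := by
      have h1 := Real.cos_sub (β + γ - ((n:ℝ)+1) * α) α
      have h2 := Real.cos_add (β + γ - ((n:ℝ)+1) * α) α
      have e1 : β + γ - ((n:ℝ)+2) * α = (β + γ - ((n:ℝ)+1)*α) - α := by ring
      have e2 : β + γ - (n:ℝ) * α = (β + γ - ((n:ℝ)+1)*α) + α := by ring
      rw [e1, e2, h1, h2]; ring
    have hpow1 : ℓ ^ (N - (n+1)) = ℓ ^ (N - (n+2)) * ℓ := by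
      rw [← pow_succ]; congr 1; omega
    have hpow0 : ℓ ^ (N - n) = ℓ ^ (N - (n+2)) * ℓ ^ 2 := by
      rw [← pow_add]; congr 1; omega
    push_cast at E1 E2
    have key : (-1) * ℓ ^ 2 * ((k (n+2):ℝ) + e (n+2))
        + 2 * Real.cos α * ℓ * ((k (n+1):ℝ) + e (n+1)) - ((k n:ℝ) + e n) = 0 := by
      rw [← E0, ← E1, ← E2, hpow1, hpow0, hcos]; ring
    have hkcombo : (-1) * ℓ ^ 2 * (k (n+2):ℝ) + 2 * Real.cos α * ℓ * (k (n+1):ℝ) - (k n:ℝ)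
        = -((-1) * ℓ ^ 2 * e (n+2) + 2 * Real.cos α * ℓ * e (n+1) - e n) := by
      linear_combination key
    constructor
    · intro hmax
      have h0 : |e n| ≤ 1 / (15 * ℓ ^ 2) := le_trans (le_max_left _ _) hmax
      have h1 : |e (n+1)| ≤ 1 / (15 * ℓ ^ 2) :=
        le_trans (le_trans (le_max_left _ _) (le_max_right _ _)) hmax
      have h2 : |e (n+2)| ≤ 1 / (15 * ℓ ^ 2) :=
        le_trans (le_trans (le_max_right _ _) (le_max_right _ _)) hmax
      rw [hkcombo, abs_neg]
      have := tri (e n) (e (n+1)) (e (n+2))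
      have a2 : ℓ ^ 2 * |e (n+2)| ≤ 1/15 := by
        calc ℓ ^ 2 * |e (n+2)| ≤ ℓ ^ 2 * (1 / (15 * ℓ ^ 2)) :=
              mul_le_mul_of_nonneg_left h2 (sq_nonneg ℓ)
          _ = 1/15 := by field_simp
      have a1 : 2 * ℓ * |e (n+1)| ≤ 2/15 := by
        calc 2 * ℓ * |e (n+1)| ≤ 2 * ℓ * (1 / (15 * ℓ ^ 2)) :=
              mul_le_mul_of_nonneg_left h1 (by positivity)
          _ ≤ 2/15 := by
              rw [mul_one_div, div_le_div_iff₀ (by positivity) (by norm_num)]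
              nlinarith
      have a0 : |e n| ≤ 1/15 := by
        refine h0.trans ?_
        rw [div_le_div_iff₀ (by positivity) (by norm_num)]
        nlinarith
      linarith
    · have h0 : |e n| ≤ 1/2 := abs_le.2 ⟨by linarith, by linarith⟩
      have h1 : |e (n+1)| ≤ 1/2 := abs_le.2 ⟨by linarith, by linarith⟩
      have h2 : |e (n+2)| ≤ 1/2 := abs_le.2 ⟨by linarith, by linarith⟩
      have := tri (e n) (e (n+1)) (e (n+2))
      have b2 : ℓ ^ 2 * |e (n+2)| ≤ ℓ ^ 2 * (1/2) :=
        mul_le_mul_of_nonneg_left h2 (sq_nonneg ℓ)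
      have b1 : 2 * ℓ * |e (n+1)| ≤ 2 * ℓ * (1/2) :=
        mul_le_mul_of_nonneg_left h1 (by positivity)
      have hs : (0:ℝ) ≤ ℓ ^ 2 := sq_nonneg ℓ
      linarith
  · intro K2 K1
    set A : ℝ := (-1) * ℓ ^ 2 * (K2 : ℝ) + 2 * Real.cos α * ℓ * (K1 : ℝ) with hA
    set B : ℝ := ℓ ^ 2 + ℓ + 1 with hB
    have hsub : {j : ℤ | |A - (j:ℝ)| ≤ B} ⊆ ↑(Finset.Icc ⌈A - B⌉ ⌊A + B⌋) := by
      intro j hj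
      simp only [Set.mem_setOf_eq, abs_le] at hj
      simp only [Finset.coe_Icc, Set.mem_Icc]
      exact ⟨Int.ceil_le.2 (by linarith [hj.2]), Int.le_floor.2 (by linarith [hj.1])⟩
    have hcard : Set.ncard {j : ℤ | |A - (j:ℝ)| ≤ B}
        ≤ (Finset.Icc ⌈A - B⌉ ⌊A + B⌋).card := by
      rw [← Set.ncard_coe_finset]
      exact Set.ncard_le_ncard hsub (Finset.finite_toSet _)
    rw [Int.card_Icc] at hcard
    have h1 : ((⌊A + B⌋ + 1 - ⌈A - B⌉).toNat : ℝ) ≤ 2 * B + 1 := by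
      have hB0 : (0:ℝ) < B := by rw [hB]; nlinarith
      rcases le_or_gt (⌊A + B⌋ + 1 - ⌈A - B⌉) 0 with h | h
      · rw [Int.toNat_of_nonpos h]; norm_num; linarith
      · have hc2 : (((⌊A + B⌋ + 1 - ⌈A - B⌉).toNat : ℕ) : ℝ)
            = ((⌊A + B⌋ + 1 - ⌈A - B⌉ : ℤ) : ℝ) := by
          exact_mod_cast congrArg (fun z : ℤ => (z : ℝ)) (Int.toNat_of_nonneg h.le)
        rw [hc2]; push_cast
        have := Int.floor_le (A + B)
        have := Int.le_ceil (A - B)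
        linarith
    have h2 : (Set.ncard {j : ℤ | |A - (j:ℝ)| ≤ B} : ℝ)
        ≤ ((⌊A + B⌋ + 1 - ⌈A - B⌉).toNat : ℝ) := by exact_mod_cast hcard
    have h3 : 2 * B + 1 ≤ 7 * ℓ ^ 2 := by rw [hB]; nlinarith
    calc (Set.ncard {j : ℤ | |A - (j:ℝ)| ≤ B} : ℝ) ≤ 2 * B + 1 := le_trans h2 h1
      _ ≤ 7 * ℓ ^ 2 := h3
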